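/- Let X be a finite square-free left cycle set of multipermutational level k with an automorphism α such that σ_{[k-1]}(x) ≠ σ_{[k-1]}(α(x)) for some x. Define X₀ := X and X_m := X_{m-1} × ℤ/2ℤ with (x,s)·(y,t) := (x·y, t + (1 - δ_{x,y})), and Z_m := X_{m-1} ∪ {z} with x∘y = x·y for x,y ∈ X_{m-1}, x∘z = z, z∘(y₀,...,y_{m-1}) = (α(y₀), y₁,...,y_{m-1}). Then Z_m is a square-free left cycle set of multipermutational level k+m, of cardinality |X|·2^{m-1} + 1. -/
import Mathlib


/-- A left cycle set: each left multiplication `op x` is bijective and the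
cycloid identity `(x·y)·(x·z) = (y·x)·(y·z)` holds. -/
def IsCycleSet {X : Type*} (op : X → X → X) : Prop :=
  (∀ x, Function.Bijective (op x)) ∧
  ∀ x y z, op (op x y) (op x z) = op (op y x) (op y z)

/-- Square-free: `x·x = x` for all `x`. -/
def IsSquareFree {X : Type*} (op : X → X → X) : Prop := ∀ x, op x x = x

/-- Non-degenerate: the squaring map `x ↦ x·x` is bijective. -/
def IsNonDeg {X : Type*} (op : X → X → X) : Prop :=
  Function.Bijective (fun x => op x x)

/-- An automorphism of a left cycle set. -/
def IsAut {X : Type*} (op : X → X → X) (α : X → X) : Prop :=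
  Function.Bijective α ∧ ∀ x y, α (op x y) = op (α x) (α y)

/-- Irretractable: the map `x ↦ σ_x` is injective. -/
def IsIrretractable {X : Type*} (op : X → X → X) : Prop := Function.Injective op

/-- `retRel op n x y` says `σ_{[n]}(x) = σ_{[n]}(y)`, i.e. `x` and `y` have the same
image in the `n`-th retraction `σⁿ(X)`. -/
def retRel {X : Type*} (op : X → X → X) : ℕ → X → X → Prop
  | 0 => Eq
  | n + 1 => fun x y => ∀ z, retRel op n (op x z) (op y z)

/-- `X` has multipermutational level `m`: `m` is minimal with `|σᵐ(X)| = 1`. -/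
def HasMPL {X : Type*} (op : X → X → X) (m : ℕ) : Prop :=
  (∀ x y, retRel op m x y) ∧ ∀ k < m, ¬ (∀ x y, retRel op k x y)

/-- The solution `r(x,y) = (λ_x(y), λ_x(y)·x)` associated to a cycle set,
where `lam x` is the inverse of `op x`. -/
def rmap {X : Type*} (op lam : X → X → X) : X × X → X × X :=
  fun p => (lam p.1 p.2, op (lam p.1 p.2) p.1)

/-- `r × id`. -/
def r1map {X : Type*} (r : X × X → X × X) : X × X × X → X × X × X :=
  fun p => ((r (p.1, p.2.1)).1, ((r (p.1, p.2.1)).2, p.2.2))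

/-- `id × r`. -/
def r2map {X : Type*} (r : X × X → X × X) : X × X × X → X × X × X :=
  fun p => (p.1, r p.2)

/-- One-sided extension of a cycle set by an automorphism `α`, with `none` as the
new element `z`: `x∘y = x·y`, `x∘z = z`, `z∘y = α(y)`. -/
def extOp {X : Type*} (op : X → X → X) (α : X → X) :
    Option X → Option X → Option X
  | some x, some y => some (op x y)
  | _, none => none
  | none, some y => some (α y)

/-- The dynamical extension `X × ℤ/2ℤ` with `(x,s)·(y,t) = (x·y, t + 1 - δ_{x,y})`. -/
def doubleOp {X : Type*} [DecidableEq X] (op : X → X → X) :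
    X × ZMod 2 → X × ZMod 2 → X × ZMod 2 :=
  fun p q => (op p.1 q.1, if p.1 = q.1 then q.2 else q.2 + 1)

/-- The Bachiller–Cedó–Jespers–Okniński operation on `A × B × I`. -/
def bcjoOp {A B I : Type*} [AddCommGroup A] [AddCommGroup B] [DecidableEq I]
    (φ₁ : A → B) (φ₂ : B →+ A) : A × B × I → A × B × I → A × B × I :=
  fun p q =>
    if p.2.2 = q.2.2 then (q.1, q.2.1 - φ₁ (p.1 - q.1), q.2.2)
    else (q.1 - φ₂ p.2.1, q.2.1, q.2.2)

/-- One-sided extension of `X` by a cycle set `Y` acting by automorphisms: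
`x∘y = x·y` inside `X` and `Y`, `x∘y = y` for `x ∈ X, y ∈ Y`, `y∘x = α(y)(x)`. -/
def sumOp {X Y : Type*} (opX : X → X → X) (opY : Y → Y → Y) (α : Y → X → X) :
    X ⊕ Y → X ⊕ Y → X ⊕ Y
  | .inl p, .inl q => .inl (opX p q)
  | .inl _, .inr y => .inr y
  | .inr y, .inl q => .inl (α y q)
  | .inr y, .inr y' => .inr (opY y y')

/-- The set of cardinalities of finite square-free non-degenerate cycle sets of
multipermutational level `m`; `N_m` is its infimum. -/
def Nset (m : ℕ) : Set ℕ :=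
  {n | ∃ (X : Type) (op : X → X → X), Finite X ∧ IsCycleSet op ∧ IsSquareFree op ∧
        IsNonDeg op ∧ HasMPL op m ∧ Nat.card X = n}

/-- The set of cardinalities of finite square-free cycle sets of level `k` admitting
an automorphism `α` with `σ_{[k-1]}(x) ≠ σ_{[k-1]}(α(x))` for some `x`;
`N̄_k` is its infimum. -/
def NbarSet (k : ℕ) : Set ℕ :=
  {n | ∃ (X : Type) (op : X → X → X), Finite X ∧ IsCycleSet op ∧ IsSquareFree op ∧
        HasMPL op k ∧ (∃ (α : X → X) (x : X), IsAut op α ∧ ¬ retRel op (k - 1) x (α x)) ∧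
        Nat.card X = n}

/-- The iterated doubling `X_m := X_{m-1} × ℤ/2ℤ`. -/
def IterX (X : Type) : ℕ → Type
  | 0 => X
  | n + 1 => IterX X n × ZMod 2

instance instDecEqIterX {X : Type} [DecidableEq X] : ∀ n, DecidableEq (IterX X n)
  | 0 => inferInstanceAs (DecidableEq X)
  | n + 1 => letI := instDecEqIterX (X := X) n; inferInstanceAs (DecidableEq (IterX X n × ZMod 2))

/-- The iterated operation `(x,s)·(y,t) := (x·y, t + 1 - δ_{x,y})`. -/
def iterOp {X : Type} [DecidableEq X] (op : X → X → X) :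
    ∀ n, IterX X n → IterX X n → IterX X n
  | 0 => op
  | n + 1 => fun p q =>
      (iterOp op n p.1 q.1, if p.1 = q.1 then q.2 else q.2 + 1)

/-- The lift `(y₀, y₁, …, y_{m-1}) ↦ (α(y₀), y₁, …, y_{m-1})` of `α` to `X_m`. -/
def iterAut {X : Type} (α : X → X) : ∀ n, IterX X n → IterX X n
  | 0 => α
  | n + 1 => fun p => (iterAut α n p.1, p.2)

section RetRelBasics

variable {X : Type*}

lemma retRel_refl (op : X → X → X) : ∀ (n : ℕ) (x : X), retRel op n x x := by
  intro n
  induction n with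
  | zero => intro x; rfl
  | succ n ih => intro x z; exact ih _

lemma retRel_succ (op : X → X → X) : ∀ (n : ℕ) (x y : X),
    retRel op n x y → retRel op (n + 1) x y := by
  intro n
  induction n with
  | zero => rintro x y rfl z; exact rfl
  | succ n ih => intro x y h z; exact ih _ _ (h z)

lemma retRel_of_le (op : X → X → X) {n m : ℕ} (h : n ≤ m) {x y : X}
    (hr : retRel op n x y) : retRel op m x y := by
  induction h with
  | refl => exact hr
  | step _ ih => exact retRel_succ op _ _ _ ih

lemma retRel_double [DecidableEq X] (op : X → X → X) :
    ∀ (n : ℕ) (p q : X × ZMod 2),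
      retRel (doubleOp op) (n + 1) p q ↔ retRel op n p.1 q.1 := by
  intro n
  induction n with
  | zero =>
    intro p q
    constructor
    · intro h
      have h1 : doubleOp op p (p.1, 0) = doubleOp op q (p.1, 0) := h (p.1, 0)
      simp only [doubleOp, if_pos rfl] at h1
      by_cases hq : q.1 = p.1
      · exact hq.symm
      · rw [if_neg hq] at h1
        have h2 := congrArg Prod.snd h1
        simp at h2
    · intro h z
      show doubleOp op p z = doubleOp op q z
      have h' : p.1 = q.1 := h
      simp [doubleOp, h']
  | succ n ih =>
    intro p q
    constructor
    · intro h c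
      exact (ih _ _).1 (h (c, 0))
    · intro h z
      exact (ih _ _).2 (h z.1)

lemma double_all [Finite X] [DecidableEq X] (op : X → X → X) (k : ℕ)
    (h : IsCycleSet op) (hsf : IsSquareFree op) (hmpl : HasMPL op (k + 1))
    (α : X → X) (hα : IsAut op α) (x x' : X) (hx : ¬ retRel op k x (α x)) :
    IsCycleSet (doubleOp op) ∧ IsSquareFree (doubleOp op) ∧
    HasMPL (doubleOp op) (k + 2) ∧
    IsAut (doubleOp op) (fun p => (α p.1, p.2)) ∧
    ¬ retRel (doubleOp op) (k + 1) (x, 0) (α x, 0) := by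
  refine ⟨⟨?_, ?_⟩, ?_, ⟨?_, ?_⟩, ⟨?_, ?_⟩, ?_⟩
  · -- bijectivity
    intro p
    rw [← Finite.injective_iff_bijective]
    intro q r hqr
    have h1 : op p.1 q.1 = op p.1 r.1 := congrArg Prod.fst hqr
    have h2 : q.1 = r.1 := (h.1 p.1).1 h1
    have h3 := congrArg Prod.snd hqr
    simp only [doubleOp, h2] at h3
    exact Prod.ext h2 (by split at h3 <;> simpa using h3)
  · -- cycloid
    intro p q r
    have hfst : op (op p.1 q.1) (op p.1 r.1) = op (op q.1 p.1) (op q.1 r.1) := h.2 _ _ _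
    have e1 : ∀ a b : X, (op a b = op a r.1) ↔ (b = r.1) := by
      intro a b
      exact ⟨fun hh => (h.1 a).1 hh, fun hh => by rw [hh]⟩
    simp only [doubleOp]
    refine Prod.ext hfst ?_
    simp only [(h.1 p.1).1.eq_iff, (h.1 q.1).1.eq_iff]
    by_cases h1 : q.1 = r.1 <;> by_cases h2 : p.1 = r.1 <;> simp [h1, h2]
  · -- square-free
    intro p
    simp [doubleOp, hsf p.1]
  · -- MPL upper
    intro p q
    exact (retRel_double op (k + 1) p q).2 (hmpl.1 _ _)
  · -- MPL lower
    intro j hj H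
    match j with
    | 0 =>
      have h0 : ((x, 0) : X × ZMod 2) = (x, 1) := H (x, 0) (x, 1)
      have h1 : (0 : ZMod 2) = 1 := congrArg Prod.snd h0
      exact absurd h1 (by decide)
    | j + 1 =>
      refine hmpl.2 j (by omega) ?_
      intro a b
      exact (retRel_double op j (a, 0) (b, 0)).1 (H (a, 0) (b, 0))
  · -- aut bijective
    have : (fun p : X × ZMod 2 => (α p.1, p.2)) = Prod.map α id := rfl
    rw [this]
    exact hα.1.prodMap Function.bijective_id
  · -- aut morphism
    intro p q
    simp only [doubleOp, hα.2, Prod.mk.injEq, true_and]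
    by_cases hpq : p.1 = q.1 <;> simp [hpq, hα.1.1.eq_iff]
  · -- witness
    intro hcon
    exact hx ((retRel_double op k (x, 0) (α x, 0)).1 hcon)

lemma retRel_ext_some (op : X → X → X) (α : X → X) :
    ∀ (n : ℕ) (a b : X),
      retRel (extOp op α) n (some a) (some b) ↔ retRel op n a b := by
  intro n
  induction n with
  | zero =>
    intro a b
    exact ⟨fun hh => Option.some_injective _ hh, fun hh => congrArg some hh⟩
  | succ n ih =>
    intro a b
    constructor
    · intro hh c
      exact (ih _ _).1 (hh (some c))
    · intro hh z
      match z with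
      | some c => exact (ih _ _).2 (hh c)
      | none => exact retRel_refl _ _ _

lemma retRel_ext_none (op : X → X → X) (α : X → X) (n : ℕ) (a : X) :
    retRel (extOp op α) (n + 1) (some a) none ↔
      ∀ c, retRel op n (op a c) (α c) := by
  constructor
  · intro hh c
    exact (retRel_ext_some op α n _ _).1 (hh (some c))
  · intro hh z
    match z with
    | some c => exact (retRel_ext_some op α n _ _).2 (hh c)
    | none => exact retRel_refl _ _ _

lemma retRel_ext_none' (op : X → X → X) (α : X → X) (n : ℕ) (a : X) :
    retRel (extOp op α) (n + 1) none (some a) ↔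
      ∀ c, retRel op n (α c) (op a c) := by
  constructor
  · intro hh c
    exact (retRel_ext_some op α n _ _).1 (hh (some c))
  · intro hh z
    match z with
    | some c => exact (retRel_ext_some op α n _ _).2 (hh c)
    | none => exact retRel_refl _ _ _

lemma ext_all [Finite X] (op : X → X → X) (k : ℕ)
    (h : IsCycleSet op) (hsf : IsSquareFree op) (hmpl : HasMPL op (k + 1))
    (α : X → X) (hα : IsAut op α) (x : X) (hx : ¬ retRel op k x (α x)) :
    IsCycleSet (extOp op α) ∧ IsSquareFree (extOp op α) ∧
    HasMPL (extOp op α) (k + 2) := by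
  refine ⟨⟨?_, ?_⟩, ?_, ?_, ?_⟩
  · -- bijectivity
    intro p
    match p with
    | some a =>
      constructor
      · intro q r hqr
        match q, r with
        | some b, some c =>
          simp only [extOp, Option.some.injEq] at hqr
          rw [(h.1 a).1 hqr]
        | some b, none => exact absurd hqr (by simp [extOp])
        | none, some c => exact absurd hqr (by simp [extOp])
        | none, none => rfl
      · intro q
        match q with
        | some c =>
          obtain ⟨b, hb⟩ := (h.1 a).2 c
          exact ⟨some b, by simp [extOp, hb]⟩
        | none => exact ⟨none, rfl⟩
    | none =>
      constructor
      · intro q r hqr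
        match q, r with
        | some b, some c =>
          simp only [extOp, Option.some.injEq] at hqr
          rw [hα.1.1 hqr]
        | some b, none => exact absurd hqr (by simp [extOp])
        | none, some c => exact absurd hqr (by simp [extOp])
        | none, none => rfl
      · intro q
        match q with
        | some c =>
          obtain ⟨b, hb⟩ := hα.1.2 c
          exact ⟨some b, by simp [extOp, hb]⟩
        | none => exact ⟨none, rfl⟩
  · -- cycloid
    intro p q r
    match p, q, r with
    | some a, some b, some c => simp only [extOp]; rw [h.2]
    | some a, some b, none => rfl
    | some a, none, some c =>
      simp only [extOp, Option.some.injEq]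
      exact hα.2 a c
    | some a, none, none => rfl
    | none, some b, some c =>
      simp only [extOp, Option.some.injEq]
      exact (hα.2 b c).symm
    | none, some b, none => rfl
    | none, none, some c => rfl
    | none, none, none => rfl
  · -- square-free
    intro p
    match p with
    | some a => simp [extOp, hsf a]
    | none => rfl
  · -- MPL upper
    intro p q
    match p, q with
    | some a, some b =>
      exact (retRel_ext_some op α _ _ _).2
        (retRel_succ op (k + 1) a b (hmpl.1 a b))
    | some a, none =>
      exact (retRel_ext_none op α (k + 1) a).2 (fun c => hmpl.1 _ _)
    | none, some b =>
      exact (retRel_ext_none' op α (k + 1) b).2 (fun c => hmpl.1 _ _)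
    | none, none => exact retRel_refl _ _ _
  · -- MPL lower
    intro j hj H
    have H' : ∀ p q, retRel (extOp op α) (k + 1) p q := by
      intro p q
      exact retRel_of_le _ (by omega) (H p q)
    have := (retRel_ext_none op α k x).1 (H' (some x) none) x
    rw [hsf x] at this
    exact hx this

end RetRelBasics

section Iter

variable {X : Type} [Finite X] [DecidableEq X]

lemma finite_iterX (n : ℕ) : Finite (IterX X n) := by
  induction n with
  | zero => exact ‹Finite X›
  | succ n ih =>
    haveI := ih
    exact inferInstanceAs (Finite (IterX X n × ZMod 2))

def iterPt (x : X) : ∀ n, IterX X n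
  | 0 => x
  | n + 1 => (iterPt x n, 0)

lemma iterOp_succ (op : X → X → X) (n : ℕ) :
    iterOp op (n + 1) = doubleOp (X := IterX X n) (iterOp op n) := rfl

lemma iter_main (op : X → X → X) (k : ℕ)
    (h : IsCycleSet op) (hsf : IsSquareFree op) (hmpl : HasMPL op (k + 1))
    (α : X → X) (hα : IsAut op α) (x : X) (hx : ¬ retRel op k x (α x)) :
    ∀ n, IsCycleSet (iterOp op n) ∧ IsSquareFree (iterOp op n) ∧
      HasMPL (iterOp op n) (k + 1 + n) ∧ IsAut (iterOp op n) (iterAut α n) ∧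
      ¬ retRel (iterOp op n) (k + n) (iterPt x n) (iterAut α n (iterPt x n)) := by
  intro n
  induction n with
  | zero => exact ⟨h, hsf, hmpl, hα, hx⟩
  | succ n ih =>
    obtain ⟨h', hsf', hmpl', hα', hx'⟩ := ih
    letI : Finite (IterX X n) := finite_iterX n
    have key := double_all (iterOp op n) (k + n) h' hsf'
      (by rw [show k + n + 1 = k + 1 + n by omega]; exact hmpl')
      (iterAut α n) hα' (iterPt x n) (iterPt x n) hx'
    rw [← iterOp_succ] at key
    refine ⟨key.1, key.2.1, ?_, key.2.2.2.1, key.2.2.2.2⟩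
    rw [show k + 1 + (n + 1) = k + n + 2 by omega]
    exact key.2.2.1

lemma card_iterX : ∀ n, Nat.card (IterX X n) = Nat.card X * 2 ^ n := by
  intro n
  induction n with
  | zero => simp [IterX]
  | succ n ih =>
    have : Nat.card (IterX X (n + 1)) = Nat.card (IterX X n) * Nat.card (ZMod 2) :=
      Nat.card_prod _ _
    rw [this, ih, Nat.card_zmod]
    ring

end Iter
/-- `Z_m = X_{m-1} ∪ {z}` is a square-free cycle set of
multipermutational level `k + m` and cardinality `|X|·2^{m-1} + 1`. -/
theorem stmt8 {X : Type} [Finite X] [DecidableEq X] (op : X → X → X) (k : ℕ)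
    (h : IsCycleSet op) (hsf : IsSquareFree op) (hmpl : HasMPL op k)
    (α : X → X) (hα : IsAut op α) (x : X) (hx : ¬ retRel op (k - 1) x (α x))
    (m : ℕ) (hm : 1 ≤ m) :
    IsCycleSet (extOp (iterOp op (m - 1)) (iterAut α (m - 1))) ∧
    IsSquareFree (extOp (iterOp op (m - 1)) (iterAut α (m - 1))) ∧
    HasMPL (extOp (iterOp op (m - 1)) (iterAut α (m - 1))) (k + m) ∧
    Nat.card (Option (IterX X (m - 1))) = Nat.card X * 2 ^ (m - 1) + 1 := by
  have hk1 : 1 ≤ k := by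
    by_contra hk
    have hk0 : k = 0 := by omega
    subst hk0
    exact hx (hmpl.1 x (α x))
  obtain ⟨k0, rfl⟩ : ∃ k0, k = k0 + 1 := ⟨k - 1, by omega⟩
  obtain ⟨n, rfl⟩ : ∃ n, m = n + 1 := ⟨m - 1, by omega⟩
  simp only [Nat.add_sub_cancel] at hx ⊢
  obtain ⟨h', hsf', hmpl', hα', hx'⟩ := iter_main op k0 h hsf hmpl α hα x hx n
  haveI : Finite (IterX X n) := finite_iterX n
  have ext := ext_all (iterOp op n) (k0 + n) h' hsf'
      (by rw [show k0 + n + 1 = k0 + 1 + n by omega]; exact hmpl')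
      (iterAut α n) hα' (iterPt x n) hx'
  refine ⟨ext.1, ext.2.1, ?_, ?_⟩
  · rw [show k0 + 1 + (n + 1) = k0 + n + 2 by omega]
    exact ext.2.2
  · haveI : Fintype (IterX X n) := Fintype.ofFinite _
    rw [Nat.card_eq_fintype_card, Fintype.card_option, ← Nat.card_eq_fintype_card,
      card_iterX]
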